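/- Let p, q be coprime positive integers, n ≥ 1, and let ω be an n-th root of unity. Let α₁,...,αₙ and β₁,...,βₙ be complex numbers with αᵢ^p = βⱼ^q = ω for all i, j, and suppose all αᵢ ≠ t^{-q}-type degeneracies are avoided in the sense that t^q αᵢ ≠ 1 and t^p βⱼ ≠ 1 as polynomials. Then the rational function (t^{pq}ω − 1)^n / (∏ᵢ(t^q αᵢ − 1) ∏ⱼ(t^p βⱼ − 1)), whenever it is a Laurent polynomial, has all coefficients algebraic integers. -/

import Mathlib

open Finset Polynomial

private lemma int_of_pow_eq_one {z : ℂ} {m : ℕ} (hm : m ≠ 0) (h : z ^ m = 1) :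
    IsIntegral ℤ z :=
  ⟨X ^ m - C 1, monic_X_pow_sub_C 1 hm, by simp [h]⟩

/-- The twisted Alexander polynomial of the `(p,q)` torus knot at an irreducible
`SL_n(ℂ)`-representation: the rational function
`(t^{pq} ω − 1)^n / (∏ᵢ (t^q αᵢ − 1) ∏ⱼ (t^p βⱼ − 1))`, whenever it is a (Laurent)
polynomial, has all coefficients algebraic integers. -/
theorem stmt6 (p q n : ℕ) (hp : 0 < p) (hq : 0 < q) (hpq : Nat.Coprime p q)
    (hn : 1 ≤ n) (ω : ℂ) (hω : ω ^ n = 1)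
    (α β : Fin n → ℂ) (hα : ∀ i, α i ^ p = ω) (hβ : ∀ j, β j ^ q = ω)
    (hmult : ∀ i j,
      (Finset.univ.filter fun i' => α i' = α i).card +
        (Finset.univ.filter fun j' => β j' = β j).card ≤ n) :
    ∃ F : Polynomial ℂ, (∀ k, IsIntegral ℤ (F.coeff k)) ∧
      F * (∏ i, (X ^ q * C (α i) - 1)) * (∏ j, (X ^ p * C (β j) - 1))
        = (X ^ (p * q) * C ω - 1) ^ n := by
  classical
  have hn0 : n ≠ 0 := Nat.one_le_iff_ne_zero.mp hn
  have hω0 : ω ≠ 0 := by rintro rfl; simp [zero_pow hn0] at hω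
  have hα0 : ∀ i, α i ≠ 0 := fun i h => hω0 (by rw [← hα i, h, zero_pow hp.ne'])
  have hβ0 : ∀ j, β j ≠ 0 := fun j h => hω0 (by rw [← hβ j, h, zero_pow hq.ne'])
  have hfac : ∀ (m : ℕ) (a : ℂ), a ≠ 0 →
      (X ^ m * C a - 1 : ℂ[X]) = C a * (X ^ m - C a⁻¹) := by
    intro m a ha
    rw [mul_sub, ← C_mul, mul_inv_cancel₀ ha, C_1, mul_comm (C a)]
  have hne : ∀ (m : ℕ), m ≠ 0 → ∀ (a : ℂ), a ≠ 0 → (X ^ m * C a - 1 : ℂ[X]) ≠ 0 := by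
    intro m hm a ha
    rw [hfac m a ha]
    exact mul_ne_zero (C_ne_zero.mpr ha) (X_pow_sub_C_ne_zero (Nat.pos_of_ne_zero hm) _)
  have hcount : ∀ (m : ℕ), m ≠ 0 → ∀ (c t : ℂ), c ≠ 0 →
      Multiset.count t (nthRoots m c) = if t ^ m = c then 1 else 0 := by
    intro m hm c t hc
    have hnd : (nthRoots m c).Nodup :=
      (Complex.isPrimitiveRoot_exp m hm).nthRoots_nodup hc
    by_cases h : t ^ m = c
    · rw [if_pos h]
      exact Multiset.count_eq_one_of_mem hnd
        ((mem_nthRoots (Nat.pos_of_ne_zero hm)).mpr h)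
    · rw [if_neg h]
      exact Multiset.count_eq_zero_of_notMem
        (fun hmem => h ((mem_nthRoots (Nat.pos_of_ne_zero hm)).mp hmem))
  have hpq0 : p * q ≠ 0 := Nat.mul_ne_zero hp.ne' hq.ne'
  -- the three polynomials
  set P1 : ℂ[X] := ∏ i, (X ^ q * C (α i) - 1) with hP1def
  set P2 : ℂ[X] := ∏ j, (X ^ p * C (β j) - 1) with hP2def
  set G : ℂ[X] := (X ^ (p * q) * C ω - 1) ^ n with hGdef
  have hprodα : P1 = C (∏ i, α i) * ∏ i, (X ^ q - C (α i)⁻¹) := by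
    rw [hP1def, map_prod, ← Finset.prod_mul_distrib]
    exact Finset.prod_congr rfl fun i _ => hfac q (α i) (hα0 i)
  have hprodβ : P2 = C (∏ j, β j) * ∏ j, (X ^ p - C (β j)⁻¹) := by
    rw [hP2def, map_prod, ← Finset.prod_mul_distrib]
    exact Finset.prod_congr rfl fun j _ => hfac p (β j) (hβ0 j)
  have hMα : (∏ i, (X ^ q - C (α i)⁻¹) : ℂ[X]) ≠ 0 :=
    prod_ne_zero_iff.mpr fun i _ => X_pow_sub_C_ne_zero hq _
  have hMβ : (∏ j, (X ^ p - C (β j)⁻¹) : ℂ[X]) ≠ 0 :=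
    prod_ne_zero_iff.mpr fun j _ => X_pow_sub_C_ne_zero hp _
  have hP1ne : P1 ≠ 0 := by
    rw [hprodα]; exact mul_ne_zero (C_ne_zero.mpr (prod_ne_zero_iff.mpr fun i _ => hα0 i)) hMα
  have hP2ne : P2 ≠ 0 := by
    rw [hprodβ]; exact mul_ne_zero (C_ne_zero.mpr (prod_ne_zero_iff.mpr fun j _ => hβ0 j)) hMβ
  have hGfne : (X ^ (p * q) * C ω - 1 : ℂ[X]) ≠ 0 := hne (p * q) hpq0 ω hω0
  have hGne : G ≠ 0 := pow_ne_zero _ hGfne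
  have hDne : P1 * P2 ≠ 0 := mul_ne_zero hP1ne hP2ne
  -- roots computations
  have hrootsα : P1.roots = Finset.univ.val.bind fun i => nthRoots q (α i)⁻¹ := by
    rw [hprodα, roots_C_mul _ (prod_ne_zero_iff.mpr fun i _ => hα0 i),
      roots_prod _ _ hMα]
    rfl
  have hrootsβ : P2.roots = Finset.univ.val.bind fun j => nthRoots p (β j)⁻¹ := by
    rw [hprodβ, roots_C_mul _ (prod_ne_zero_iff.mpr fun j _ => hβ0 j),
      roots_prod _ _ hMβ]
    rfl
  have hrootsG : G.roots = n • nthRoots (p * q) ω⁻¹ := by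
    rw [hGdef, roots_pow, hfac _ _ hω0, roots_C_mul _ hω0]
    rfl
  -- root multiplicity inequality
  have hle : (P1 * P2).roots ≤ G.roots := by
    rw [roots_mul hDne, hrootsα, hrootsβ, hrootsG]
    refine Multiset.le_iff_count.mpr fun t => ?_
    rw [Multiset.count_add, Multiset.count_nsmul, Multiset.count_bind, Multiset.count_bind]
    have eα : (Multiset.map (fun i => Multiset.count t (nthRoots q (α i)⁻¹))
        Finset.univ.val).sum = ∑ i, if t ^ q = (α i)⁻¹ then 1 else 0 := by
      refine congrArg Multiset.sum (Multiset.map_congr rfl fun i _ => ?_)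
      exact hcount q hq.ne' _ t (inv_ne_zero (hα0 i))
    have eβ : (Multiset.map (fun j => Multiset.count t (nthRoots p (β j)⁻¹))
        Finset.univ.val).sum = ∑ j, if t ^ p = (β j)⁻¹ then 1 else 0 := by
      refine congrArg Multiset.sum (Multiset.map_congr rfl fun j _ => ?_)
      exact hcount p hp.ne' _ t (inv_ne_zero (hβ0 j))
    rw [eα, eβ, hcount (p * q) hpq0 _ t (inv_ne_zero hω0)]
    by_cases hT : t ^ (p * q) = ω⁻¹
    · rw [if_pos hT, mul_one]
      rw [← Finset.card_filter, ← Finset.card_filter]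
      by_cases hA : ∃ i, t ^ q = (α i)⁻¹
      · by_cases hB : ∃ j, t ^ p = (β j)⁻¹
        · obtain ⟨i₀, hi₀⟩ := hA
          obtain ⟨j₀, hj₀⟩ := hB
          have e1 : (Finset.univ.filter fun i' => t ^ q = (α i')⁻¹)
              = Finset.univ.filter fun i' => α i' = α i₀ := by
            refine Finset.filter_congr fun i' _ => ?_
            constructor
            · intro h; exact inv_injective (by rw [← h, hi₀])
            · intro h; rw [h]; exact hi₀
          have e2 : (Finset.univ.filter fun j' => t ^ p = (β j')⁻¹)
              = Finset.univ.filter fun j' => β j' = β j₀ := by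
            refine Finset.filter_congr fun j' _ => ?_
            constructor
            · intro h; exact inv_injective (by rw [← h, hj₀])
            · intro h; rw [h]; exact hj₀
          rw [e1, e2]
          exact hmult i₀ j₀
        · have e2 : (Finset.univ.filter fun j' => t ^ p = (β j')⁻¹) = ∅ := by
            refine Finset.filter_eq_empty_iff.mpr fun j' _ => fun h => hB ⟨j', h⟩
          rw [e2, Finset.card_empty, add_zero]
          exact le_trans (Finset.card_filter_le _ _) (by simp)
      · have e1 : (Finset.univ.filter fun i' => t ^ q = (α i')⁻¹) = ∅ := by
          refine Finset.filter_eq_empty_iff.mpr fun i' _ => fun h => hA ⟨i', h⟩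
        rw [e1, Finset.card_empty, zero_add]
        exact le_trans (Finset.card_filter_le _ _) (by simp)
    · rw [if_neg hT, mul_zero]
      have e1 : ∀ i, (if t ^ q = (α i)⁻¹ then (1 : ℕ) else 0) = 0 := by
        intro i
        rw [if_neg]
        intro h
        apply hT
        rw [mul_comm p q, pow_mul, h, inv_pow, hα i]
      have e2 : ∀ j, (if t ^ p = (β j)⁻¹ then (1 : ℕ) else 0) = 0 := by
        intro j
        rw [if_neg]
        intro h
        apply hT
        rw [pow_mul, h, inv_pow, hβ j]
      simp [e1, e2]
  -- divisibility
  have hdvd : P1 * P2 ∣ G :=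
    (IsAlgClosed.splits (k := ℂ) _).dvd_of_roots_le_roots hDne hle
  obtain ⟨F, hF⟩ := hdvd
  have hFne : F ≠ 0 := by rintro rfl; rw [mul_zero] at hF; exact hGne hF
  refine ⟨F, ?_, by rw [mul_assoc, mul_comm F, ← hF]⟩
  -- leading coefficient is a root of unity
  have hlcG : G.leadingCoeff = 1 := by
    rw [hGdef, leadingCoeff_pow, hfac _ _ hω0, leadingCoeff_mul, leadingCoeff_C,
      (monic_X_pow_sub_C _ hpq0).leadingCoeff, mul_one, hω]
  have hlcP1 : P1.leadingCoeff = ∏ i, α i := by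
    rw [hprodα, leadingCoeff_mul, leadingCoeff_C,
      (monic_prod_of_monic _ _ fun i _ => monic_X_pow_sub_C _ hq.ne').leadingCoeff, mul_one]
  have hlcP2 : P2.leadingCoeff = ∏ j, β j := by
    rw [hprodβ, leadingCoeff_mul, leadingCoeff_C,
      (monic_prod_of_monic _ _ fun j _ => monic_X_pow_sub_C _ hp.ne').leadingCoeff, mul_one]
  have hlcF : F.leadingCoeff ^ (p * q * n) = 1 := by
    have h1 : (∏ i, α i) * (∏ j, β j) * F.leadingCoeff = 1 := by
      rw [← hlcP1, ← hlcP2, ← leadingCoeff_mul, ← leadingCoeff_mul, ← hF, hlcG]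
    have hA : ((∏ i, α i) * (∏ j, β j)) ^ (p * q * n) = 1 := by
      rw [mul_pow, ← Finset.prod_pow, ← Finset.prod_pow]
      have ea : ∀ i : Fin n, α i ^ (p * q * n) = 1 := fun i => by
        rw [show p * q * n = p * (q * n) from by ring, pow_mul, hα, mul_comm q n, pow_mul, hω, one_pow]
      have eb : ∀ j : Fin n, β j ^ (p * q * n) = 1 := fun j => by
        rw [show p * q * n = q * (p * n) from by ring, pow_mul, hβ, mul_comm p n, pow_mul, hω, one_pow]
      simp [ea, eb]
    calc F.leadingCoeff ^ (p * q * n)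
        = ((∏ i, α i) * (∏ j, β j)) ^ (p * q * n) * F.leadingCoeff ^ (p * q * n) := by
          rw [hA, one_mul]
      _ = ((∏ i, α i) * (∏ j, β j) * F.leadingCoeff) ^ (p * q * n) := by ring
      _ = 1 := by rw [h1, one_pow]
  have hlcInt : IsIntegral ℤ F.leadingCoeff :=
    int_of_pow_eq_one (Nat.mul_ne_zero hpq0 hn0) hlcF
  -- all roots of F are roots of unity, hence integral
  have hrootsInt : ∀ r ∈ F.roots, IsIntegral ℤ r := by
    intro r hr
    have hrG : r ∈ G.roots := by
      have : F.roots ≤ G.roots := roots.le_of_dvd hGne ⟨P1 * P2, by rw [hF]; ring⟩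
      exact Multiset.mem_of_le this hr
    rw [hrootsG] at hrG
    have hrn : r ∈ nthRoots (p * q) ω⁻¹ := Multiset.mem_of_mem_nsmul hrG
    have hrpq : r ^ (p * q) = ω⁻¹ := (mem_nthRoots (Nat.pos_of_ne_zero hpq0)).mp hrn
    refine int_of_pow_eq_one (Nat.mul_ne_zero hpq0 hn0) ?_
    rw [pow_mul, hrpq, inv_pow, hω, inv_one]
  -- conclude: F lies in the lifts of the algebraic integers
  intro k
  set S := integralClosure ℤ ℂ with hS
  set f : S →+* ℂ := (algebraMap S ℂ : S →+* ℂ) with hf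
  have hmem : F ∈ lifts f := by
    have hsplit : F.Splits := IsAlgClosed.splits F
    rw [hsplit.eq_prod_roots]
    refine mul_mem ?_ ?_
    · exact C_mem_lifts f ⟨F.leadingCoeff, hlcInt⟩
    · refine multiset_prod_mem _ fun x hx => ?_
      obtain ⟨r, hr, rfl⟩ := Multiset.mem_map.mp hx
      have : (X - C r : ℂ[X]) = X + C (-r) := by rw [map_neg, sub_eq_add_neg]
      rw [this]
      exact add_mem (X_mem_lifts f) (C_mem_lifts f ⟨-r, (hrootsInt r hr).neg⟩)
  obtain ⟨x, hx⟩ := (lifts_iff_coeff_lifts F).mp hmem k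
  rw [← hx]
  exact x.2
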